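/- Let J_1, …, J_m be subintervals of [n], let the star network G = G_{J_1} ∘ ⋯ ∘ G_{J_m} have weighted path matrix B, and fix w ∈ S_n. Then the coefficient of T_w in the natural-basis expansion of C̃_{s_{J_1}}(q) ⋯ C̃_{s_{J_m}}(q) ∈ H_n(q) is equal to q^{-ℓ(w)/2} σ_B(x^{e,w}). -/

import Mathlib

/- Common combinatorial setup: star networks, covering path families,
   crossing/noncrossing statistics, and the base ring ℤ[q^{1/2},q^{-1/2}]. -/

open Equiv Finset
open scoped Classical

noncomputable section

/-- The ring `ℤ[q^{1/2}, q^{-1/2}]`, realized as Laurent polynomials in the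
variable `q^{1/2}` (so the exponent-`k` monomial is `q^{k/2}`). -/
abbrev R2 : Type := LaurentPolynomial ℤ

/-- `q^{k/2}`. -/
def Qp (k : ℤ) : R2 := LaurentPolynomial.T k

/-- `q`. -/
def qq : R2 := LaurentPolynomial.T 2

/-- Coxeter length of a permutation, i.e. its inversion number. -/
def len {n : ℕ} (w : Perm (Fin n)) : ℕ :=
  ((univ : Finset (Fin n × Fin n)).filter fun p => p.1 < p.2 ∧ w p.2 < w p.1).card

/-- Membership in the interval `J = [a,b] ⊆ [n]`. -/
def memJ {n : ℕ} (J : Fin n × Fin n) (i : Fin n) : Prop := J.1 ≤ i ∧ i ≤ J.2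

/-- Membership in the subgroup `S_J ≤ S_n` generated by the adjacent
transpositions `s_a, …, s_{b-1}` of the interval `J = [a,b]`; equivalently,
the permutations supported on `[a,b]`. -/
def inSJ {n : ℕ} (J : Fin n × Fin n) (w : Perm (Fin n)) : Prop :=
  ∀ i, w i ≠ i → memJ J i

/-- A path family covering the star network `G_{J_1} ∘ ⋯ ∘ G_{J_m}` is
faithfully encoded by the permutation of the wire positions realized at each
simple-star factor: at factor `p` the paths whose current positions lie in
`J_p` pass through the central vertex and are permuted arbitrarily within
`J_p` (every entering and leaving edge being used exactly once), while all
other paths use their unique horizontal edge.  Thus a covering family is a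
sequence `vs` of permutations with `vs p` supported on `J_p`. -/
def IsPathFamily {n m : ℕ} (Js : Fin m → Fin n × Fin n)
    (vs : Fin m → Perm (Fin n)) : Prop :=
  ∀ p, inSJ (Js p) (vs p)

/-- The position of the path starting at source `i` just before factor `k`
(as a permutation of sources). -/
def posAt {n m : ℕ} (vs : Fin m → Perm (Fin n)) (k : ℕ) : Perm (Fin n) :=
  (((List.ofFn vs).take k).reverse).prod

/-- The type of a covering path family: the path starting at source `i`
terminates at sink `typeOf vs i`. -/
def typeOf {n m : ℕ} (vs : Fin m → Perm (Fin n)) : Perm (Fin n) := posAt vs m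

/-- The path from source `i` passes through the central vertex of the factor
`G_{J_p}`. -/
def centeredAt {n m : ℕ} (Js : Fin m → Fin n × Fin n) (vs : Fin m → Perm (Fin n))
    (p : Fin m) (i : Fin n) : Prop :=
  (Js p).1 < (Js p).2 ∧ memJ (Js p) (posAt vs p i)

/-- The paths from sources `i` and `j` both pass through the central vertex of
the factor `G_{J_p}`. -/
def meetAt {n m : ℕ} (Js : Fin m → Fin n × Fin n) (vs : Fin m → Perm (Fin n))
    (p : Fin m) (i j : Fin n) : Prop :=
  centeredAt Js vs p i ∧ centeredAt Js vs p j

/-- The triple `(π_i, π_j, p)` is a crossing: the two paths intersect at the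
central vertex of `G_{J_p}` and cross there. -/
def crossingAt {n m : ℕ} (Js : Fin m → Fin n × Fin n) (vs : Fin m → Perm (Fin n))
    (p : Fin m) (i j : Fin n) : Prop :=
  meetAt Js vs p i j ∧
    ¬ ((posAt vs p i < posAt vs p j) ↔ (posAt vs (p.1 + 1) i < posAt vs (p.1 + 1) j))

/-- `cross(π)`: the number of crossings of the path family. -/
def crossNum {n m : ℕ} (Js : Fin m → Fin n × Fin n)
    (vs : Fin m → Perm (Fin n)) : ℕ :=
  ((univ : Finset ((Fin n × Fin n) × Fin m)).filter fun x =>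
    x.1.1 < x.1.2 ∧ crossingAt Js vs x.2 x.1.1 x.1.2).card

/-- The triple `(π_i, π_j, p)` is a noncrossing with `π_i` entering and
leaving the central vertex of `G_{J_p}` below `π_j`. -/
def noncrossBelow {n m : ℕ} (Js : Fin m → Fin n × Fin n) (vs : Fin m → Perm (Fin n))
    (p : Fin m) (i j : Fin n) : Prop :=
  meetAt Js vs p i j ∧
    posAt vs p i < posAt vs p j ∧ posAt vs (p.1 + 1) i < posAt vs (p.1 + 1) j

/-- `incross(U)` for a tableau `U` containing the paths of `π`, recorded via
the function `col` assigning to each path (index) the index of the column of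
`U` containing it: the number of inverted noncrossings, i.e. noncrossings
`(π_i, π_j, p)` (with `π_i` below `π_j`) such that `π_j` lies in an earlier
column of `U` than `π_i`. -/
def incrossNum {n m : ℕ} (Js : Fin m → Fin n × Fin n) (vs : Fin m → Perm (Fin n))
    (col : Fin n → ℕ) : ℕ :=
  ((univ : Finset ((Fin n × Fin n) × Fin m)).filter fun x =>
    noncrossBelow Js vs x.2 x.1.1 x.1.2 ∧ col x.1.2 < col x.1.1).card

/-- The number of crossings of the two paths `π_i, π_j` strictly before the
factor `G_{J_p}`. -/
def crossBefore {n m : ℕ} (Js : Fin m → Fin n × Fin n) (vs : Fin m → Perm (Fin n))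
    (p : Fin m) (i j : Fin n) : ℕ :=
  ((univ : Finset (Fin m)).filter fun k => k < p ∧ crossingAt Js vs k i j).card

/-- The triple `(π_i, π_j, p)` is defective: the paths meet at the central
vertex of `G_{J_p}` having previously crossed an odd number of times. -/
def defectiveAt {n m : ℕ} (Js : Fin m → Fin n × Fin n) (vs : Fin m → Perm (Fin n))
    (p : Fin m) (i j : Fin n) : Prop :=
  meetAt Js vs p i j ∧ Odd (crossBefore Js vs p i j)

/-- `dfct(π)`: the number of defective triples of the path family. -/
def dfctNum {n m : ℕ} (Js : Fin m → Fin n × Fin n)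
    (vs : Fin m → Perm (Fin n)) : ℕ :=
  ((univ : Finset ((Fin n × Fin n) × Fin m)).filter fun x =>
    x.1.1 < x.1.2 ∧ defectiveAt Js vs x.2 x.1.1 x.1.2).card

/-- `cdncross(W)`: the number of defective noncrossings between pairs of
paths appearing in the same column of the tableau recorded by `col`. -/
def cdncrossNum {n m : ℕ} (Js : Fin m → Fin n × Fin n) (vs : Fin m → Perm (Fin n))
    (col : Fin n → ℕ) : ℕ :=
  ((univ : Finset ((Fin n × Fin n) × Fin m)).filter fun x =>
    x.1.1 < x.1.2 ∧ defectiveAt Js vs x.2 x.1.1 x.1.2 ∧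
      ¬ crossingAt Js vs x.2 x.1.1 x.1.2 ∧ col x.1.1 = col x.1.2).card

/-- The adjacent transposition `s_{i+1}` (0-indexed: swaps positions `i` and
`i+1`). -/
def swp {n : ℕ} (i : ℕ) (h : i + 1 < n) : Perm (Fin n) :=
  Equiv.swap ⟨i, by omega⟩ ⟨i + 1, h⟩

end
/- The weight monomial statistics: the coefficient `[z_G] b_{1,w_1} ⋯ b_{n,w_n}`.
Expanding the product of path-matrix entries distributively, each term is the
weight word of a choice of a path from source `i` to sink `w i` for each `i`;
the coefficient of the square-free monomial `z_G` vanishes unless the chosen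
paths form a covering family, and for a covering family the weight word,
sorted into lexicographic order using the relations
`z_{h_2,p,k} z_{h_1,p,k} = q^{1/2} z_{h_1,p,k} z_{h_2,p,k}` (`h_1 < h_2`),
contributes `q^{inv/2}` where `inv` counts the pairs of variables appearing
out of lexicographic order. -/

noncomputable section
open Equiv Finset
open scoped Classical

/-- The number of out-of-order pairs of variables in the weight word
`wgt(π_1) ⋯ wgt(π_n)` of a covering path family: for sources `i < j`, the
variables of path `i` precede those of path `j`, and a pair of entering
(resp. leaving) variables at a common factor `p` is out of lexicographic
order exactly when path `j` is below path `i` entering (resp. leaving) the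
central vertex of `G_{J_p}`. -/
def wordInv {n m : ℕ} (Js : Fin m → Fin n × Fin n)
    (vs : Fin m → Perm (Fin n)) : ℕ :=
  ((univ : Finset ((Fin n × Fin n) × Fin m × Fin 2)).filter fun x =>
    x.1.1 < x.1.2 ∧ meetAt Js vs x.2.1 x.1.1 x.1.2 ∧
      ((x.2.2 = 0 ∧ posAt vs x.2.1 x.1.2 < posAt vs x.2.1 x.1.1) ∨
       (x.2.2 = 1 ∧ posAt vs (x.2.1.1 + 1) x.1.2 < posAt vs (x.2.1.1 + 1) x.1.1))).card

/-- `σ_B(x^{e,w}) = [z_G] b_{1,w_1} ⋯ b_{n,w_n}`, where `B` is the weighted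
path matrix of the star network `G = G_{J_1} ∘ ⋯ ∘ G_{J_m}`. -/
def zGcoeff {n m : ℕ} (Js : Fin m → Fin n × Fin n) (w : Perm (Fin n)) : R2 :=
  ∑ vs ∈ (univ : Finset (Fin m → Perm (Fin n))).filter
      (fun vs => IsPathFamily Js vs ∧ typeOf vs = w),
    Qp (wordInv Js vs : ℤ)

end
/- The Hecke algebra `H_n(q)`, presented abstractly: a ring `H` which is an
algebra over `R2 = ℤ[q^{1/2},q^{-1/2}]` together with a family
`T : S_n → H` (the natural basis) satisfying `T_e = 1` and the defining
right-multiplication rule by the generators `T_{s_i}`.  Group products of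
permutations are written so that the product `v w` of the paper corresponds
to the composition `w * v` of `Equiv.Perm`. -/

noncomputable section
open Equiv Finset
open scoped Classical

/-- The defining relations of the Hecke algebra in terms of the natural
basis: `T_e = 1` and
`T_w T_{s_i} = T_{w s_i}` if `ℓ(w s_i) > ℓ(w)`, and
`T_w T_{s_i} = q T_{w s_i} + (q-1) T_w` otherwise. -/
def HeckeOK {n : ℕ} {H : Type*} [Ring H] [Algebra R2 H]
    (T : Perm (Fin n) → H) : Prop :=
  T 1 = 1 ∧
    ∀ (w : Perm (Fin n)) (i : ℕ) (h : i + 1 < n),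
      T w * T (swp i h) =
        if len w < len (swp i h * w) then T (swp i h * w)
        else qq • T (swp i h * w) + (qq - 1) • T w

/-- The (modified) Kazhdan–Lusztig basis element
`C̃_{s_J}(q) = Σ_{v ∈ S_J} T_v`. -/
def CJ {n : ℕ} {H : Type*} [Ring H] [Algebra R2 H]
    (T : Perm (Fin n) → H) (J : Fin n × Fin n) : H :=
  ∑ v ∈ (univ : Finset (Perm (Fin n))).filter (fun v => inSJ J v), T v

/-- The product `C̃_{s_{J_1}}(q) ⋯ C̃_{s_{J_m}}(q)`. -/
def Cprod {n m : ℕ} {H : Type*} [Ring H] [Algebra R2 H]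
    (T : Perm (Fin n) → H) (Js : Fin m → Fin n × Fin n) : H :=
  (List.ofFn (fun p => CJ T (Js p))).prod

end
noncomputable section
open Equiv Finset
open scoped Classical

variable {n : ℕ}

theorem Equiv.Perm.apply_inv_self {α : Type*} (f : Perm α) (x : α) : f (f⁻¹ x) = x :=
  f.apply_symm_apply x

theorem Equiv.Perm.inv_apply_self {α : Type*} (f : Perm α) (x : α) : f⁻¹ (f x) = x :=
  f.symm_apply_apply x

def invQ (Q : Fin n → Prop) (w : Perm (Fin n)) : ℕ :=
  ((univ : Finset (Fin n × Fin n)).filter fun p =>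
    p.1 < p.2 ∧ Q (w p.1) ∧ Q (w p.2) ∧ w p.2 < w p.1).card

lemma len_eq_invQ (w : Perm (Fin n)) : len w = invQ (fun _ => True) w := by
  unfold len invQ
  congr 1
  ext x
  simp only [mem_filter]
  tauto

lemma swap_lt {a b x y : Fin n} (hab : (b : ℕ) = a + 1) (hxy : x < y)
    (hne : ¬(x = a ∧ y = b)) : Equiv.swap a b x < Equiv.swap a b y := by
  simp only [Equiv.swap_apply_def]
  simp only [Fin.ext_iff, Fin.lt_def] at *
  split_ifs <;> omega

lemma swap_lt_iff {a b x y : Fin n} (hab : (b : ℕ) = a + 1)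
    (h1 : ¬(x = a ∧ y = b)) (h2 : ¬(x = b ∧ y = a)) :
    Equiv.swap a b x < Equiv.swap a b y ↔ x < y := by
  constructor
  · intro h
    rcases lt_trichotomy x y with h' | h' | h'
    · exact h'
    · subst h'; exact absurd h (lt_irrefl _)
    · exact absurd (swap_lt hab h' (fun ⟨p, q⟩ => h2 ⟨q, p⟩)) (not_lt.2 (le_of_lt h))
  · intro h; exact swap_lt hab h h1

lemma swap_mem_iff {a b x : Fin n} {Q : Fin n → Prop} (hQa : Q a) (hQb : Q b) :
    Q (Equiv.swap a b x) ↔ Q x := by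
  rcases eq_or_ne x a with rfl | hxa
  · simp [Equiv.swap_apply_left, hQa, hQb]
  rcases eq_or_ne x b with rfl | hxb
  · simp [Equiv.swap_apply_right, hQa, hQb]
  · rw [Equiv.swap_apply_of_ne_of_ne hxa hxb]

lemma invQ_swap_asc {a b : Fin n} (hab : (b : ℕ) = a + 1) (Q : Fin n → Prop)
    (hQa : Q a) (hQb : Q b) (w : Perm (Fin n)) (h : w⁻¹ a < w⁻¹ b) :
    invQ Q (Equiv.swap a b * w) = invQ Q w + 1 := by
  classical
  set s := Equiv.swap a b with hs
  set p0 : Fin n × Fin n := (w⁻¹ a, w⁻¹ b) with hp0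
  set A := (univ : Finset (Fin n × Fin n)).filter fun p =>
    p.1 < p.2 ∧ Q (w p.1) ∧ Q (w p.2) ∧ w p.2 < w p.1 with hA
  set B := (univ : Finset (Fin n × Fin n)).filter fun p =>
    p.1 < p.2 ∧ Q ((s * w) p.1) ∧ Q ((s * w) p.2) ∧ (s * w) p.2 < (s * w) p.1 with hB
  have hwa : w (w⁻¹ a) = a := Perm.apply_inv_self w a
  have hwb : w (w⁻¹ b) = b := Perm.apply_inv_self w b
  have key : ∀ x : Fin n × Fin n, x ≠ p0 → x.1 < x.2 →
      ((s * w) x.2 < (s * w) x.1 ↔ w x.2 < w x.1) := by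
    intro x hne hlt
    have h1 : ¬(w x.2 = a ∧ w x.1 = b) := by
      rintro ⟨e1, e2⟩
      have q2 : x.2 = w⁻¹ a := by rw [← e1, Perm.inv_apply_self]
      have q1 : x.1 = w⁻¹ b := by rw [← e2, Perm.inv_apply_self]
      rw [q1, q2] at hlt
      exact absurd h (not_lt.2 (le_of_lt hlt))
    have h2 : ¬(w x.2 = b ∧ w x.1 = a) := by
      rintro ⟨e1, e2⟩
      apply hne
      have q1 : x.1 = w⁻¹ a := by rw [← e2, Perm.inv_apply_self]
      have q2 : x.2 = w⁻¹ b := by rw [← e1, Perm.inv_apply_self]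
      rw [hp0]
      exact Prod.ext_iff.mpr ⟨q1, q2⟩
    simpa only [Perm.mul_apply] using swap_lt_iff hab h1 h2
  have hp0B : p0 ∈ B := by
    have e1 : (s * w) p0.1 = b := by
      simp only [hp0, Perm.mul_apply, hwa, hs, Equiv.swap_apply_left]
    have e2 : (s * w) p0.2 = a := by
      simp only [hp0, Perm.mul_apply, hwb, hs, Equiv.swap_apply_right]
    rw [hB, mem_filter]
    refine ⟨mem_univ _, h, ?_, ?_, ?_⟩
    · rw [e1]; exact hQb
    · rw [e2]; exact hQa
    · rw [e1, e2]; exact Fin.lt_def.2 (by omega)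
  have hp0A : p0 ∉ A := by
    rw [hA, mem_filter]
    rintro ⟨-, -, -, -, hlt⟩
    rw [show p0.1 = w⁻¹ a from rfl, show p0.2 = w⁻¹ b from rfl, hwa, hwb] at hlt
    rw [Fin.lt_def] at hlt
    omega
  have herase : B.erase p0 = A.erase p0 := by
    ext x
    simp only [mem_erase, hA, hB, mem_filter, mem_univ, true_and]
    constructor
    · rintro ⟨hne, hlt, q1, q2, hinv⟩
      refine ⟨hne, hlt, ?_, ?_, (key x hne hlt).1 hinv⟩
      · rw [Perm.mul_apply, hs] at q1; exact (swap_mem_iff hQa hQb).1 q1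
      · rw [Perm.mul_apply, hs] at q2; exact (swap_mem_iff hQa hQb).1 q2
    · rintro ⟨hne, hlt, q1, q2, hinv⟩
      refine ⟨hne, hlt, ?_, ?_, (key x hne hlt).2 hinv⟩
      · rw [Perm.mul_apply, hs]; exact (swap_mem_iff hQa hQb).2 q1
      · rw [Perm.mul_apply, hs]; exact (swap_mem_iff hQa hQb).2 q2
  have hBc : invQ Q (s * w) = B.card := rfl
  have hAc : invQ Q w = A.card := rfl
  rw [hBc, hAc, ← Finset.card_erase_add_one hp0B, herase, Finset.erase_eq_of_notMem hp0A]

lemma invQ_swap_desc {a b : Fin n} (hab : (b : ℕ) = a + 1) (Q : Fin n → Prop)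
    (hQa : Q a) (hQb : Q b) (w : Perm (Fin n)) (h : w⁻¹ b < w⁻¹ a) :
    invQ Q w = invQ Q (Equiv.swap a b * w) + 1 := by
  have h' : (Equiv.swap a b * w)⁻¹ a < (Equiv.swap a b * w)⁻¹ b := by
    simp only [mul_inv_rev, Perm.mul_apply, Equiv.swap_inv, Equiv.swap_apply_left,
      Equiv.swap_apply_right]
    exact h
  have := invQ_swap_asc hab Q hQa hQb (Equiv.swap a b * w) h'
  rw [← mul_assoc, Equiv.swap_mul_self, one_mul] at this
  exact this

lemma len_swap_asc {a b : Fin n} (hab : (b : ℕ) = a + 1) (w : Perm (Fin n))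
    (h : w⁻¹ a < w⁻¹ b) : len (Equiv.swap a b * w) = len w + 1 := by
  rw [len_eq_invQ, len_eq_invQ]
  exact invQ_swap_asc hab _ trivial trivial w h

lemma len_swap_desc {a b : Fin n} (hab : (b : ℕ) = a + 1) (w : Perm (Fin n))
    (h : w⁻¹ b < w⁻¹ a) : len w = len (Equiv.swap a b * w) + 1 := by
  rw [len_eq_invQ, len_eq_invQ]
  exact invQ_swap_desc hab _ trivial trivial w h

lemma len_inv (w : Perm (Fin n)) : len w⁻¹ = len w := by
  unfold len
  apply Finset.card_nbij' (fun p => (w⁻¹ p.2, w⁻¹ p.1)) (fun p => (w p.2, w p.1))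
  · intro x hx
    simp only [Finset.mem_coe, mem_filter, mem_univ, true_and] at hx ⊢
    simp only [Perm.apply_inv_self]
    exact ⟨hx.2, hx.1⟩
  · intro x hx
    simp only [Finset.mem_coe, mem_filter, mem_univ, true_and] at hx ⊢
    simp only [Perm.inv_apply_self]
    exact ⟨hx.2, hx.1⟩
  · intro x _; simp
  · intro x _; simp

/-- A strictly monotone permutation of `Fin n` is the identity. -/
lemma perm_strictMono_eq_one {f : Perm (Fin n)} (h : StrictMono ⇑f) : f = 1 := by
  have hinv : StrictMono ⇑f⁻¹ := by
    intro x y hxy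
    rcases lt_trichotomy (f⁻¹ x) (f⁻¹ y) with h' | h' | h'
    · exact h'
    · exfalso
      have : x = y := by
        have := congrArg f h'
        simpa using this
      rw [this] at hxy
      exact absurd hxy (lt_irrefl _)
    · exfalso
      have := h h'
      simp only [Perm.apply_inv_self] at this
      exact absurd hxy (not_lt.2 (le_of_lt this))
  have hle : ∀ (g : Perm (Fin n)), StrictMono ⇑g → ∀ x : Fin n, x ≤ g x := by
    intro g hg x
    rcases x with ⟨v, hv⟩
    induction v with
    | zero => simp [Fin.le_def]
    | succ t ih =>
      have ht : t < n := by omega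
      have h1 : (⟨t, ht⟩ : Fin n) ≤ g ⟨t, ht⟩ := ih ht
      have h2 : g ⟨t, ht⟩ < g ⟨t + 1, hv⟩ := hg (by exact Fin.lt_def.2 (by simp))
      rw [Fin.le_def] at h1 ⊢
      rw [Fin.lt_def] at h2
      simp only [Fin.val_mk] at *
      omega
  apply Equiv.ext
  intro x
  have h1 : x ≤ f x := hle f h x
  have h2 : f x ≤ x := by
    have := hle f⁻¹ hinv (f x)
    simpa using this
  exact le_antisymm h2 h1

lemma adj_mono {f : Fin n → Fin n}
    (h : ∀ k (hk : k + 1 < n), f ⟨k, Nat.lt_of_succ_lt hk⟩ < f ⟨k + 1, hk⟩) :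
    StrictMono f := by
  have key : ∀ t (c d : Fin n), (d : ℕ) = (c : ℕ) + t + 1 → f c < f d := by
    intro t
    induction t with
    | zero =>
      intro c d hd
      have hc : (c : ℕ) + 1 < n := by omega
      have : c = ⟨(c : ℕ), Nat.lt_of_succ_lt hc⟩ := by
        apply Fin.ext; rfl
      have hd' : d = ⟨(c : ℕ) + 1, hc⟩ := by
        apply Fin.ext
        show (d : ℕ) = (c : ℕ) + 1
        omega
      rw [this, hd']
      exact h _ hc
    | succ t ih =>
      intro c d hd
      have hmid : (c : ℕ) + t + 1 < n := by omega
      have h1 : f c < f ⟨(c : ℕ) + t + 1, hmid⟩ := ih c _ (by simp)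
      have h2 : f ⟨(c : ℕ) + t + 1, hmid⟩ < f d := by
        have hc : (c : ℕ) + t + 1 + 1 < n := by omega
        have : d = ⟨(c : ℕ) + t + 1 + 1, hc⟩ := by
          apply Fin.ext
          show (d : ℕ) = (c : ℕ) + t + 1 + 1
          omega
        rw [this]
        exact h _ hc
      exact lt_trans h1 h2
  intro c d hcd
  have : (d : ℕ) = (c : ℕ) + ((d : ℕ) - (c : ℕ) - 1) + 1 := by
    rw [Fin.lt_def] at hcd; omega
  exact key _ c d this

/-- Existence of a left descent for a nonidentity permutation. -/
lemma exists_descent {w : Perm (Fin n)} (hw : w ≠ 1) :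
    ∃ (k : ℕ) (hk : k + 1 < n),
      w⁻¹ ⟨k + 1, hk⟩ < w⁻¹ ⟨k, Nat.lt_of_succ_lt hk⟩ := by
  by_contra hc
  push_neg at hc
  apply hw
  have : StrictMono ⇑w⁻¹ := by
    apply adj_mono
    intro k hk
    have := hc k hk
    rcases lt_or_eq_of_le this with h' | h'
    · exact h'
    · exfalso
      have := w⁻¹.injective h'
      simp only [Fin.ext_iff] at this
      omega
  have := perm_strictMono_eq_one this
  rw [← inv_inv w, this, inv_one]

lemma len_eq_zero {w : Perm (Fin n)} (hw : len w = 0) : w = 1 := by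
  by_contra hc
  obtain ⟨k, hk, hdesc⟩ := exists_descent hc
  have := len_swap_desc (a := ⟨k, Nat.lt_of_succ_lt hk⟩) (b := ⟨k + 1, hk⟩) rfl w hdesc
  omega

lemma len_one : len (1 : Perm (Fin n)) = 0 := by
  unfold len
  rw [Finset.card_eq_zero, Finset.filter_eq_empty_iff]
  intro x _
  simp only [Perm.one_apply]
  rintro ⟨h1, h2⟩
  exact absurd h1 (not_lt.2 (le_of_lt h2))

/-- Right multiplication by an adjacent transposition changes length by one. -/
lemma len_mul_swap_asc {a b : Fin n} (hab : (b : ℕ) = a + 1) (w : Perm (Fin n))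
    (h : w a < w b) : len (w * Equiv.swap a b) = len w + 1 := by
  rw [← len_inv (w * Equiv.swap a b), mul_inv_rev, Equiv.swap_inv, ← len_inv w]
  apply len_swap_asc hab
  simpa using h

lemma len_mul_swap_desc {a b : Fin n} (hab : (b : ℕ) = a + 1) (w : Perm (Fin n))
    (h : w b < w a) : len w = len (w * Equiv.swap a b) + 1 := by
  rw [← len_inv (w * Equiv.swap a b), mul_inv_rev, Equiv.swap_inv, ← len_inv w]
  apply len_swap_desc hab
  simpa using h

lemma exists_right_descent {w : Perm (Fin n)} (hw : w ≠ 1) :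
    ∃ (k : ℕ) (hk : k + 1 < n),
      w ⟨k + 1, hk⟩ < w ⟨k, Nat.lt_of_succ_lt hk⟩ := by
  have : w⁻¹ ≠ 1 := by
    intro h1
    apply hw
    rw [← inv_inv w, h1, inv_one]
  obtain ⟨k, hk, hdesc⟩ := exists_descent this
  exact ⟨k, hk, by simpa using hdesc⟩

lemma len_subadd (x y : Perm (Fin n)) : len (x * y) ≤ len x + len y := by
  generalize hN : len y = N
  induction N generalizing y with
  | zero => rw [len_eq_zero hN, mul_one]; omega
  | succ N ih =>
    have hy : y ≠ 1 := by
      intro h1; rw [h1, len_one] at hN; omega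
    obtain ⟨k, hk, hdesc⟩ := exists_right_descent hy
    have hN' : len (y * Equiv.swap ⟨k, Nat.lt_of_succ_lt hk⟩ ⟨k + 1, hk⟩) = N := by
      have := len_mul_swap_desc rfl y hdesc
      omega
    have h1 : len (x * (y * Equiv.swap ⟨k, Nat.lt_of_succ_lt hk⟩ ⟨k + 1, hk⟩)) ≤ len x + N :=
      ih _ hN'
    have hxy : x * y = (x * (y * Equiv.swap ⟨k, Nat.lt_of_succ_lt hk⟩ ⟨k + 1, hk⟩)) *
        Equiv.swap ⟨k, Nat.lt_of_succ_lt hk⟩ ⟨k + 1, hk⟩ := by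
      rw [mul_assoc, mul_assoc, Equiv.swap_mul_self, mul_one]
    rw [hxy]
    set z := x * (y * Equiv.swap ⟨k, Nat.lt_of_succ_lt hk⟩ ⟨k + 1, hk⟩) with hz
    rcases lt_trichotomy (z ⟨k, Nat.lt_of_succ_lt hk⟩) (z ⟨k + 1, hk⟩) with h' | h' | h'
    · rw [len_mul_swap_asc rfl z h']
      omega
    · exfalso
      have := z.injective h'
      simp only [Fin.ext_iff] at this
      omega
    · have := len_mul_swap_desc rfl z h'
      omega

def invJ (J : Fin n × Fin n) (w : Perm (Fin n)) : ℕ := invQ (memJ J) w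

variable {J : Fin n × Fin n}

lemma inSJ_one : inSJ J (1 : Perm (Fin n)) := fun i hi => absurd rfl hi

lemma inSJ_inv {v : Perm (Fin n)} (hv : inSJ J v) : inSJ J v⁻¹ := by
  intro i hi
  apply hv
  intro h
  apply hi
  nth_rewrite 1 [← h]
  exact Perm.inv_apply_self v i

lemma inSJ_mul {v w : Perm (Fin n)} (hv : inSJ J v) (hw : inSJ J w) :
    inSJ J (v * w) := by
  intro i hi
  rcases eq_or_ne (w i) i with h | h
  · apply hv
    rw [Perm.mul_apply, h] at hi
    exact hi
  · exact hw i h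

lemma inSJ_swap {a b : Fin n} (ha : memJ J a) (hb : memJ J b) :
    inSJ J (Equiv.swap a b) := by
  intro i hi
  rcases eq_or_ne i a with rfl | h1
  · exact ha
  rcases eq_or_ne i b with rfl | h2
  · exact hb
  · rw [Equiv.swap_apply_of_ne_of_ne h1 h2] at hi
    exact absurd rfl hi

lemma fix_of_not_memJ {v : Perm (Fin n)} (hv : inSJ J v) {x : Fin n}
    (hx : ¬ memJ J x) : v x = x := by
  by_contra h
  exact hx (hv x h)

lemma memJ_apply_iff {v : Perm (Fin n)} (hv : inSJ J v) (x : Fin n) :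
    memJ J (v x) ↔ memJ J x := by
  rcases eq_or_ne (v x) x with h | h
  · rw [h]
  · have h1 : memJ J x := hv x h
    have h2 : memJ J (v x) := by
      apply inSJ_inv hv
      rw [Perm.inv_apply_self]
      exact fun hh => h hh.symm
    simp [h1, h2]

/-- All inversions of an element of `S_J` lie inside `J`. -/
lemma inv_memJ {v : Perm (Fin n)} (hv : inSJ J v) {k l : Fin n}
    (hkl : k < l) (hinv : v l < v k) : memJ J k ∧ memJ J l := by
  have hmemk : memJ J k := by
    by_contra hk
    have hfix : v k = k := fix_of_not_memJ hv hk
    rcases not_and_or.1 hk with h | h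
    · have hk1 : k < J.1 := not_le.1 h
      have hvl : v l < J.1 := lt_trans (hfix ▸ hinv) hk1
      have hnl : ¬ memJ J l := by
        rw [← memJ_apply_iff hv l]
        exact fun hm => absurd hm.1 (not_le.2 hvl)
      have : v l = l := fix_of_not_memJ hv hnl
      rw [this] at hvl hinv
      rw [hfix] at hinv
      exact absurd hkl (not_lt.2 (le_of_lt hinv))
    · have hk2 : J.2 < k := not_le.1 h
      have hnl : ¬ memJ J l := fun hm => absurd hm.2 (not_le.2 (lt_trans hk2 hkl))
      have hl : v l = l := fix_of_not_memJ hv hnl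
      rw [hl, hfix] at hinv
      exact absurd hkl (not_lt.2 (le_of_lt hinv))
  refine ⟨hmemk, ?_⟩
  by_contra hl
  have hfixl : v l = l := fix_of_not_memJ hv hl
  rcases not_and_or.1 hl with h | h
  · exact absurd (lt_trans (lt_of_le_of_lt hmemk.1 hkl) (not_le.1 h)) (lt_irrefl _)
  · have hl2 : J.2 < l := not_le.1 h
    have hvk : memJ J (v k) := (memJ_apply_iff hv k).2 hmemk
    rw [hfixl] at hinv
    exact absurd (lt_trans hl2 (lt_of_lt_of_le hinv hvk.2)) (lt_irrefl _)

lemma invJ_pos_descent {u : Perm (Fin n)} (h : invJ J u ≠ 0) :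
    ∃ (k : ℕ) (hk : k + 1 < n), memJ J ⟨k, Nat.lt_of_succ_lt hk⟩ ∧ memJ J ⟨k + 1, hk⟩ ∧
      u⁻¹ ⟨k + 1, hk⟩ < u⁻¹ ⟨k, Nat.lt_of_succ_lt hk⟩ := by
  by_contra hc
  push_neg at hc
  apply h
  rw [invJ, invQ, Finset.card_eq_zero, Finset.filter_eq_empty_iff]
  rintro ⟨i, j⟩ -
  rintro ⟨hij, hQ1, hQ2, hinv⟩
  dsimp only at hij hQ1 hQ2 hinv
  have adj : ∀ (c d : Fin n), memJ J c → memJ J d → (d : ℕ) = (c : ℕ) + 1 →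
      u⁻¹ c < u⁻¹ d := by
    intro c d hc' hd' hcd
    have hk : (c : ℕ) + 1 < n := by have := d.isLt; omega
    have e1 : c = ⟨(c : ℕ), Nat.lt_of_succ_lt hk⟩ := by apply Fin.ext; rfl
    have e2 : d = ⟨(c : ℕ) + 1, hk⟩ := by apply Fin.ext; exact hcd
    have hle := hc (c : ℕ) hk
    rw [← e1, ← e2] at hle
    refine lt_of_le_of_ne (hle hc' hd') ?_
    intro h'
    have h3 := u⁻¹.injective h'
    have := congrArg Fin.val h3
    omega
  have key : ∀ t (c d : Fin n), memJ J c → memJ J d → (d : ℕ) = (c : ℕ) + t + 1 →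
      u⁻¹ c < u⁻¹ d := by
    intro t
    induction t with
    | zero => intro c d hc' hd' hcd; exact adj c d hc' hd' (by omega)
    | succ t ih =>
      intro c d hc' hd' hcd
      have hmidlt : (c : ℕ) + t + 1 < n := by have := d.isLt; omega
      set mid : Fin n := ⟨(c : ℕ) + t + 1, hmidlt⟩ with hmid
      have hmmem : memJ J mid := by
        constructor
        · refine le_trans hc'.1 ?_
          rw [Fin.le_def]
          show (c : ℕ) ≤ (c : ℕ) + t + 1
          omega
        · refine le_trans ?_ hd'.2
          rw [Fin.le_def]
          show (c : ℕ) + t + 1 ≤ (d : ℕ)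
          omega
      have h1 : u⁻¹ c < u⁻¹ mid := ih c mid hc' hmmem rfl
      have h2 : u⁻¹ mid < u⁻¹ d := adj mid d hmmem hd' (by show (d : ℕ) = (c : ℕ) + t + 1 + 1; omega)
      exact lt_trans h1 h2
  have hji : (u j : ℕ) < (u i : ℕ) := Fin.lt_def.1 hinv
  have hlt : ((u i : Fin n) : ℕ) = ((u j : Fin n) : ℕ) + ((u i : ℕ) - (u j : ℕ) - 1) + 1 := by
    omega
  have := key _ (u j) (u i) hQ2 hQ1 hlt
  simp only [Perm.inv_apply_self] at this
  exact absurd hij (not_lt.2 (le_of_lt this))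

def coJ (J : Fin n × Fin n) (w : Perm (Fin n)) : ℕ :=
  ((univ : Finset (Fin n × Fin n)).filter fun p =>
    p.1 < p.2 ∧ ¬(memJ J (w p.1) ∧ memJ J (w p.2)) ∧ w p.2 < w p.1).card

lemma len_split (J : Fin n × Fin n) (w : Perm (Fin n)) :
    len w = invJ J w + coJ J w := by
  classical
  have := Finset.card_filter_add_card_filter_not
    (s := (univ : Finset (Fin n × Fin n)).filter fun p => p.1 < p.2 ∧ w p.2 < w p.1)
    (p := fun p => memJ J (w p.1) ∧ memJ J (w p.2))
  rw [Finset.filter_filter, Finset.filter_filter] at this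
  have e1 : invJ J w = ((univ : Finset (Fin n × Fin n)).filter fun p =>
      (p.1 < p.2 ∧ w p.2 < w p.1) ∧ memJ J (w p.1) ∧ memJ J (w p.2)).card := by
    rw [invJ, invQ]
    congr 1
    ext x
    simp only [mem_filter]
    tauto
  have e2 : coJ J w = ((univ : Finset (Fin n × Fin n)).filter fun p =>
      (p.1 < p.2 ∧ w p.2 < w p.1) ∧ ¬(memJ J (w p.1) ∧ memJ J (w p.2))).card := by
    rw [coJ]
    congr 1
    ext x
    simp only [mem_filter]
    tauto
  rw [len, ← this, e1, e2]

lemma order_iff_of_not_both {v : Perm (Fin n)} (hv : inSJ J v) {x y : Fin n}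
    (hxy : ¬(memJ J x ∧ memJ J y)) : (v y < v x ↔ y < x) := by
  rcases Classical.em (memJ J x) with hx | hx
  · have hy : ¬ memJ J y := fun h => hxy ⟨hx, h⟩
    have hfy : v y = y := fix_of_not_memJ hv hy
    have hvx : memJ J (v x) := (memJ_apply_iff hv x).2 hx
    rw [hfy]
    rcases not_and_or.1 hy with h | h
    · -- y < J.1 ≤ x, v x
      have h1 : y < J.1 := not_le.1 h
      constructor
      · intro _; exact lt_of_lt_of_le h1 hx.1
      · intro _; exact lt_of_lt_of_le h1 hvx.1
    · have h1 : J.2 < y := not_le.1 h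
      constructor
      · intro hh; exact absurd (lt_trans (lt_of_le_of_lt hvx.2 h1) hh) (lt_irrefl _)
      · intro hh; exact absurd (lt_trans (lt_of_le_of_lt hx.2 h1) hh) (lt_irrefl _)
  · have hfx : v x = x := fix_of_not_memJ hv hx
    rw [hfx]
    rcases Classical.em (memJ J y) with hy | hy
    · have hvy : memJ J (v y) := (memJ_apply_iff hv y).2 hy
      rcases not_and_or.1 hx with h | h
      · have h1 : x < J.1 := not_le.1 h
        constructor
        · intro hh; exact absurd (lt_trans (lt_of_le_of_lt hvy.1 hh) h1) (lt_irrefl _)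
        · intro hh; exact absurd (lt_trans (lt_of_le_of_lt hy.1 hh) h1) (lt_irrefl _)
      · have h1 : J.2 < x := not_le.1 h
        constructor
        · intro _; exact lt_of_le_of_lt hy.2 h1
        · intro _; exact lt_of_le_of_lt hvy.2 h1
    · rw [fix_of_not_memJ hv hy]

lemma coJ_mul {v : Perm (Fin n)} (hv : inSJ J v) (u : Perm (Fin n)) :
    coJ J (v * u) = coJ J u := by
  unfold coJ
  congr 1
  ext x
  simp only [mem_filter, mem_univ, true_and]
  simp only [Perm.mul_apply]
  constructor
  · rintro ⟨h1, h2, h3⟩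
    rw [memJ_apply_iff hv, memJ_apply_iff hv] at h2
    exact ⟨h1, h2, (order_iff_of_not_both hv h2).1 h3⟩
  · rintro ⟨h1, h2, h3⟩
    refine ⟨h1, ?_, (order_iff_of_not_both hv h2).2 h3⟩
    rw [memJ_apply_iff hv, memJ_apply_iff hv]
    exact h2

/-- Length change under left multiplication by `v ∈ S_J` is governed by `J`-inversions. -/
lemma lenF {v : Perm (Fin n)} (hv : inSJ J v) (u : Perm (Fin n)) :
    len (v * u) + invJ J u = len u + invJ J (v * u) := by
  rw [len_split J (v * u), len_split J u, coJ_mul hv u]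
  ring

/-- All inversions of `v ∈ S_J` are `J`-inversions. -/
lemma invJ_self {v : Perm (Fin n)} (hv : inSJ J v) : invJ J v = len v := by
  rw [len_split J v]
  have : coJ J v = 0 := by
    rw [coJ, Finset.card_eq_zero, Finset.filter_eq_empty_iff]
    rintro ⟨i, j⟩ -
    rintro ⟨h1, h2, h3⟩
    have := inv_memJ hv h1 h3
    exact h2 ⟨(memJ_apply_iff hv _).2 this.1, (memJ_apply_iff hv _).2 this.2⟩
  omega

lemma no_Jinv_of_zero {u : Perm (Fin n)} (hu : invJ J u = 0) {i j : Fin n}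
    (hij : i < j) (h1 : memJ J (u i)) (h2 : memJ J (u j)) : u i < u j := by
  have hempty := Finset.filter_eq_empty_iff.1 (Finset.card_eq_zero.1 hu)
  have hnot := hempty (mem_univ (i, j))
  simp only [not_and] at hnot
  have hne : u i ≠ u j := fun h => absurd (u.injective h) (ne_of_lt hij)
  rcases lt_or_gt_of_ne hne with h' | h'
  · exact h'
  · exact absurd h' (hnot hij h1 h2)

/-- If `u` has no `J`-inversions then the `J`-inversions of `v * u` count `len v`. -/
lemma invJ_mul_of_zero {v u : Perm (Fin n)} (hv : inSJ J v) (hu : invJ J u = 0) :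
    invJ J (v * u) = len v := by
  rw [invJ, invQ, len]
  apply Finset.card_nbij' (fun p => (u p.1, u p.2)) (fun p => (u⁻¹ p.1, u⁻¹ p.2))
  · rintro ⟨i, j⟩ hm
    simp only [Finset.mem_coe, mem_filter, mem_univ, true_and] at hm ⊢
    simp only [Perm.mul_apply] at hm ⊢
    obtain ⟨h1, h2, h3, h4⟩ := hm
    rw [memJ_apply_iff hv] at h2 h3
    exact ⟨no_Jinv_of_zero hu h1 h2 h3, h4⟩
  · rintro ⟨k, l⟩ hm
    simp only [Finset.mem_coe, mem_filter, mem_univ, true_and] at hm ⊢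
    simp only [Perm.mul_apply] at hm ⊢
    obtain ⟨h1, h2⟩ := hm
    have hmem := inv_memJ hv h1 h2
    have e1 : u (u⁻¹ k) = k := u.apply_inv_self k
    have e2 : u (u⁻¹ l) = l := u.apply_inv_self l
    rw [e1, e2]
    refine ⟨?_, (memJ_apply_iff hv k).2 hmem.1, (memJ_apply_iff hv l).2 hmem.2, h2⟩
    -- u⁻¹ k < u⁻¹ l
    have hne : u⁻¹ k ≠ u⁻¹ l := fun h => absurd (u⁻¹.injective h) (ne_of_lt h1)
    rcases lt_or_gt_of_ne hne with h' | h'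
    · exact h'
    · exfalso
      have := no_Jinv_of_zero hu h' (by rw [e2]; exact hmem.2) (by rw [e1]; exact hmem.1)
      rw [e1, e2] at this
      exact absurd h1 (not_lt.2 (le_of_lt this))
  · rintro ⟨i, j⟩ -
    simp
  · rintro ⟨k, l⟩ -
    simp

lemma Qp_add (a b : ℤ) : Qp a * Qp b = Qp (a + b) :=
  (LaurentPolynomial.T_add a b).symm

lemma Qp_zero : Qp 0 = 1 := LaurentPolynomial.T_zero

variable {H : Type*} [Ring H] [Algebra R2 H]

lemma swp_eq (k : ℕ) (hk : k + 1 < n) :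
    swp k hk = Equiv.swap ⟨k, Nat.lt_of_succ_lt hk⟩ ⟨k + 1, hk⟩ := rfl

lemma len_swp (k : ℕ) (hk : k + 1 < n) : len (swp k hk) = 1 := by
  rw [swp_eq]
  have := len_swap_asc (a := ⟨k, Nat.lt_of_succ_lt hk⟩) (b := ⟨k + 1, hk⟩) rfl 1
    (by simp [Fin.lt_def])
  rw [mul_one, len_one] at this
  rw [this]

lemma Tmul (T : Module.Basis (Perm (Fin n)) R2 H) (hT : HeckeOK ⇑T) :
    ∀ N (v u : Perm (Fin n)), len v = N → len (v * u) = len v + len u →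
      T u * T v = T (v * u) := by
  intro N
  induction N using Nat.strong_induction_on with
  | _ N ih =>
    intro v u hN hadd
    rcases eq_or_ne v 1 with rfl | hv
    · rw [hT.1, mul_one, one_mul]
    · obtain ⟨k, hk, hdesc⟩ := exists_descent hv
      set a : Fin n := ⟨k, Nat.lt_of_succ_lt hk⟩ with hadef
      set b : Fin n := ⟨k + 1, hk⟩ with hbdef
      have hab : (b : ℕ) = (a : ℕ) + 1 := rfl
      have hlen : len v = len (Equiv.swap a b * v) + 1 := len_swap_desc hab v hdesc
      set v' := Equiv.swap a b * v with hv'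
      have hsv' : swp k hk * v' = v := by
        rw [swp_eq, ← hadef, ← hbdef, hv', ← mul_assoc, Equiv.swap_mul_self, one_mul]
      have hTv : T v' * T (swp k hk) = T v := by
        rw [hT.2 v' k hk, hsv', if_pos (by omega)]
      have hle1 : len (v' * u) ≤ len v' + len u := len_subadd v' u
      have hle2 : len (v * u) ≤ len (v' * u) + 1 := by
        have : v * u = Equiv.swap a b * (v' * u) := by
          rw [hv', ← mul_assoc, ← mul_assoc, Equiv.swap_mul_self, one_mul]
        rw [this]
        rcases lt_trichotomy ((v' * u)⁻¹ a) ((v' * u)⁻¹ b) with h' | h' | h'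
        · rw [len_swap_asc hab _ h']
        · exfalso
          have := congrArg Fin.val ((v' * u)⁻¹.injective h')
          omega
        · have := len_swap_desc hab _ h'
          omega
      have hadd' : len (v' * u) = len v' + len u := by omega
      have ih1 : T u * T v' = T (v' * u) := ih (len v') (by omega) v' u rfl hadd'
      have final : T (v' * u) * T (swp k hk) = T (v * u) := by
        rw [hT.2 (v' * u) k hk]
        have e : swp k hk * (v' * u) = v * u := by
          rw [← mul_assoc, hsv']
        rw [e, if_pos (by omega)]
      calc T u * T v = T u * (T v' * T (swp k hk)) := by rw [hTv]
        _ = (T u * T v') * T (swp k hk) := by rw [mul_assoc]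
        _ = T (v' * u) * T (swp k hk) := by rw [ih1]
        _ = T (v * u) := final

lemma Tsq (T : Module.Basis (Perm (Fin n)) R2 H) (hT : HeckeOK ⇑T) (k : ℕ) (hk : k + 1 < n) :
    T (swp k hk) * T (swp k hk) = qq • (1 : H) + (qq - 1) • T (swp k hk) := by
  rw [hT.2 (swp k hk) k hk]
  have h1 : swp k hk * swp k hk = 1 := by
    rw [swp_eq, Equiv.swap_mul_self]
  rw [h1, if_neg (by rw [len_swp, len_one]; omega), hT.1]

lemma Ts_mul_CJ (T : Module.Basis (Perm (Fin n)) R2 H) (hT : HeckeOK ⇑T) {J : Fin n × Fin n}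
    (k : ℕ) (hk : k + 1 < n) (ha : memJ J ⟨k, Nat.lt_of_succ_lt hk⟩)
    (hb : memJ J ⟨k + 1, hk⟩) :
    T (swp k hk) * CJ ⇑T J = qq • CJ ⇑T J := by
  set a : Fin n := ⟨k, Nat.lt_of_succ_lt hk⟩ with hadef
  set b : Fin n := ⟨k + 1, hk⟩ with hbdef
  have hab : (b : ℕ) = (a : ℕ) + 1 := rfl
  have hswp : swp k hk = Equiv.swap a b := rfl
  have hsa : swp k hk a = b := by rw [hswp]; exact Equiv.swap_apply_left a b
  have hsb : swp k hk b = a := by rw [hswp]; exact Equiv.swap_apply_right a b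
  have hss : swp k hk * swp k hk = 1 := by rw [hswp]; exact Equiv.swap_mul_self a b
  have hsSJ : inSJ J (swp k hk) := by rw [hswp]; exact inSJ_swap ha hb
  set SJf := (univ : Finset (Perm (Fin n))).filter (fun v => inSJ J v) with hSJf
  have hmem : ∀ v : Perm (Fin n), v ∈ SJf ↔ inSJ J v := by
    intro v; rw [hSJf, mem_filter]; simp
  have hmove : ∀ v ∈ SJf, v * swp k hk ∈ SJf := by
    intro v hv
    rw [hmem] at hv ⊢
    exact inSJ_mul hv hsSJ
  have hinvol : ∀ v : Perm (Fin n), v * swp k hk * swp k hk = v := by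
    intro v; rw [mul_assoc, hss, mul_one]
  have hCJ : CJ ⇑T J = ∑ v ∈ SJf, T v := rfl
  rw [hCJ, Finset.mul_sum, Finset.smul_sum]
  rw [← Finset.sum_filter_add_sum_filter_not SJf (fun v => v a < v b)
    (fun v => T (swp k hk) * T v)]
  rw [← Finset.sum_filter_add_sum_filter_not SJf (fun v => v a < v b)
    (fun v => qq • T v)]
  -- ascent terms
  have hasc : ∀ v ∈ SJf.filter (fun v => v a < v b),
      T (swp k hk) * T v = T (v * swp k hk) := by
    intro v hv
    rw [mem_filter] at hv
    apply Tmul T hT (len v) v (swp k hk) rfl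
    rw [len_swp, hswp, len_mul_swap_asc hab v hv.2]
  -- descent terms
  have hdesc : ∀ v ∈ SJf.filter (fun v => ¬ v a < v b),
      T (swp k hk) * T v = qq • T (v * swp k hk) + (qq - 1) • T v := by
    intro v hv
    rw [mem_filter] at hv
    have hne : v a ≠ v b := fun h => by
      have := congrArg Fin.val (v.injective h); omega
    have hba : v b < v a := lt_of_le_of_ne (not_lt.1 hv.2) (fun h => hne h.symm)
    have hlen : len v = len (v * swp k hk) + 1 := by
      rw [hswp]; exact len_mul_swap_desc hab v hba
    have hTv : T (swp k hk) * T (v * swp k hk) = T v := by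
      have := Tmul T hT (len (v * swp k hk)) (v * swp k hk) (swp k hk) rfl
        (by rw [hinvol, len_swp]; omega)
      rw [hinvol] at this
      exact this
    calc T (swp k hk) * T v
        = T (swp k hk) * (T (swp k hk) * T (v * swp k hk)) := by rw [hTv]
      _ = (T (swp k hk) * T (swp k hk)) * T (v * swp k hk) := by rw [mul_assoc]
      _ = (qq • (1 : H) + (qq - 1) • T (swp k hk)) * T (v * swp k hk) := by
          rw [Tsq T hT k hk]
      _ = qq • T (v * swp k hk) + (qq - 1) • (T (swp k hk) * T (v * swp k hk)) := by
          rw [add_mul, smul_mul_assoc, smul_mul_assoc, one_mul]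
      _ = qq • T (v * swp k hk) + (qq - 1) • T v := by rw [hTv]
  rw [Finset.sum_congr rfl hasc, Finset.sum_congr rfl hdesc]
  have hswapAD : ∀ v : Perm (Fin n), v ∈ SJf.filter (fun v => v a < v b) ↔
      v * swp k hk ∈ SJf.filter (fun v => ¬ v a < v b) := by
    intro v
    simp only [hSJf, mem_filter, mem_univ, true_and]
    constructor
    · rintro ⟨h1, h2⟩
      refine ⟨inSJ_mul h1 hsSJ, ?_⟩
      rw [Perm.mul_apply, Perm.mul_apply, hsa, hsb]
      exact fun h => absurd (lt_trans h h2) (lt_irrefl _)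
    · rintro ⟨h1, h2⟩
      have h1' : inSJ J v := by
        have h3 := inSJ_mul h1 hsSJ
        rw [hinvol] at h3
        exact h3
      refine ⟨h1', ?_⟩
      rw [Perm.mul_apply, Perm.mul_apply, hsa, hsb] at h2
      have hne : v a ≠ v b := fun h => by
        have := congrArg Fin.val (v.injective h); omega
      exact lt_of_le_of_ne (not_lt.1 h2) hne
  have e1 : ∑ v ∈ SJf.filter (fun v => v a < v b), T (v * swp k hk) =
      ∑ v ∈ SJf.filter (fun v => ¬ v a < v b), T v := by
    apply Finset.sum_nbij' (fun v => v * swp k hk) (fun v => v * swp k hk)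
    · intro v hv; exact (hswapAD v).1 hv
    · intro v hv
      rw [hswapAD, hinvol]
      exact hv
    · intro v _; exact hinvol v
    · intro v _; exact hinvol v
    · intro v _; rfl
  have e2 : ∑ v ∈ SJf.filter (fun v => ¬ v a < v b), qq • T (v * swp k hk) =
      ∑ v ∈ SJf.filter (fun v => v a < v b), qq • T v := by
    apply Finset.sum_nbij' (fun v => v * swp k hk) (fun v => v * swp k hk)
    · intro v hv
      rw [hswapAD, hinvol]
      exact hv
    · intro v hv; exact (hswapAD v).1 hv
    · intro v _; exact hinvol v
    · intro v _; exact hinvol v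
    · intro v _; rfl
  rw [e1, Finset.sum_add_distrib, e2]
  have e4 : ∑ v ∈ SJf.filter (fun v => ¬ v a < v b), T v +
      ∑ v ∈ SJf.filter (fun v => ¬ v a < v b), (qq - 1) • T v =
      ∑ v ∈ SJf.filter (fun v => ¬ v a < v b), qq • T v := by
    rw [← Finset.sum_add_distrib]
    apply Finset.sum_congr rfl
    intro v _
    rw [sub_smul, one_smul]
    abel
  rw [← e4]
  abel

/-- The key product rule: `T_u · C̃_J = q^{invJ(u)} Σ_{v ∈ S_J} T_{vu}`. -/
lemma T_mul_CJ (T : Module.Basis (Perm (Fin n)) R2 H) (hT : HeckeOK ⇑T) (J : Fin n × Fin n)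
    (u : Perm (Fin n)) :
    T u * CJ ⇑T J = Qp (2 * (invJ J u : ℤ)) •
      ∑ v ∈ (univ : Finset (Perm (Fin n))).filter (fun v => inSJ J v), T (v * u) := by
  generalize hN : invJ J u = N
  induction N using Nat.strong_induction_on generalizing u with
  | _ N ih =>
    rcases Nat.eq_zero_or_pos N with rfl | hpos
    · -- no J-inversions
      have hbase : ∀ v ∈ (univ : Finset (Perm (Fin n))).filter (fun v => inSJ J v),
          T u * T v = T (v * u) := by
        intro v hv
        rw [mem_filter] at hv
        apply Tmul T hT (len v) v u rfl
        have h1 := lenF hv.2 u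
        rw [hN, invJ_mul_of_zero hv.2 hN] at h1
        omega
      rw [CJ, Finset.mul_sum, Finset.sum_congr rfl hbase]
      norm_num [Qp_zero]
    · -- peel off a J-descent
      obtain ⟨k, hk, ha, hb, hdesc⟩ := invJ_pos_descent (by omega : invJ J u ≠ 0)
      set a : Fin n := ⟨k, Nat.lt_of_succ_lt hk⟩ with hadef
      set b : Fin n := ⟨k + 1, hk⟩ with hbdef
      have hab : (b : ℕ) = (a : ℕ) + 1 := rfl
      have hswp : swp k hk = Equiv.swap a b := rfl
      set u' := Equiv.swap a b * u with hu'
      have hlen : len u = len u' + 1 := len_swap_desc hab u hdesc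
      have hinv : invJ J u = invJ J u' + 1 := invQ_swap_desc hab (memJ J) ha hb u hdesc
      have hsu' : swp k hk * u' = u := by
        rw [hswp, hu', ← mul_assoc, Equiv.swap_mul_self, one_mul]
      have hTu : T u' * T (swp k hk) = T u := by
        rw [hT.2 u' k hk, hsu', if_pos (by omega)]
      have hIH := ih (invJ J u') (by omega) u' rfl
      have hTsCJ : T (swp k hk) * CJ ⇑T J = qq • CJ ⇑T J := Ts_mul_CJ T hT k hk ha hb
      have hss : swp k hk * swp k hk = 1 := by rw [hswp]; exact Equiv.swap_mul_self a b
      have hinvol : ∀ v : Perm (Fin n), v * swp k hk * swp k hk = v := by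
        intro v; rw [mul_assoc, hss, mul_one]
      have hsSJ : inSJ J (swp k hk) := by rw [hswp]; exact inSJ_swap ha hb
      have hreindex : ∑ v ∈ (univ : Finset (Perm (Fin n))).filter (fun v => inSJ J v),
          T (v * u') = ∑ v ∈ (univ : Finset (Perm (Fin n))).filter (fun v => inSJ J v),
          T (v * u) := by
        apply Finset.sum_nbij' (fun v => v * swp k hk) (fun v => v * swp k hk)
        · intro v hv
          rw [mem_filter] at hv ⊢
          exact ⟨mem_univ _, inSJ_mul hv.2 hsSJ⟩
        · intro v hv
          rw [mem_filter] at hv ⊢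
          exact ⟨mem_univ _, inSJ_mul hv.2 hsSJ⟩
        · intro v _; exact hinvol v
        · intro v _; exact hinvol v
        · intro v _
          have e : v * u' = v * swp k hk * u := by
            rw [hu', ← hswp, ← mul_assoc]
          rw [e]
      calc T u * CJ ⇑T J
          = T u' * (T (swp k hk) * CJ ⇑T J) := by rw [← mul_assoc, hTu]
        _ = T u' * (qq • CJ ⇑T J) := by rw [hTsCJ]
        _ = qq • (T u' * CJ ⇑T J) := mul_smul_comm qq (T u') (CJ ⇑T J)
        _ = qq • (Qp (2 * (invJ J u' : ℤ)) •
            ∑ v ∈ (univ : Finset (Perm (Fin n))).filter (fun v => inSJ J v), T (v * u')) := by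
            rw [hIH]
        _ = (qq * Qp (2 * (invJ J u' : ℤ))) •
            ∑ v ∈ (univ : Finset (Perm (Fin n))).filter (fun v => inSJ J v), T (v * u') := by
            rw [smul_smul]
        _ = Qp (2 * (N : ℤ)) •
            ∑ v ∈ (univ : Finset (Perm (Fin n))).filter (fun v => inSJ J v), T (v * u) := by
            rw [hreindex]
            congr 1
            show Qp 2 * Qp (2 * (invJ J u' : ℤ)) = Qp (2 * (N : ℤ))
            rw [Qp_add]
            congr 1
            have : (invJ J u' : ℤ) = (N : ℤ) - 1 := by
              rw [hinv] at hN
              omega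
            rw [this]
            ring

/-! ### Structural lemmas for path families -/

lemma ofFn_snoc {α : Type*} {m : ℕ} (vs : Fin m → α) (v : α) :
    List.ofFn (Fin.snoc vs v : Fin (m + 1) → α) = List.ofFn vs ++ [v] := by
  rw [List.ofFn_succ', List.concat_eq_append]
  congr 1
  · congr 1
    funext i
    exact Fin.snoc_castSucc (α := fun _ => α) v vs i
  · rw [Fin.snoc_last]

lemma posAt_snoc {m : ℕ} (vs : Fin m → Perm (Fin n)) (v : Perm (Fin n)) {k : ℕ}
    (hk : k ≤ m) : posAt (Fin.snoc vs v : Fin (m + 1) → Perm (Fin n)) k = posAt vs k := by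
  unfold posAt
  rw [ofFn_snoc, List.take_append_of_le_length (by rw [List.length_ofFn]; exact hk)]

lemma typeOf_eq {m : ℕ} (vs : Fin m → Perm (Fin n)) :
    typeOf vs = (List.ofFn vs).reverse.prod := by
  unfold typeOf posAt
  rw [List.take_of_length_le (by rw [List.length_ofFn])]

lemma typeOf_snoc {m : ℕ} (vs : Fin m → Perm (Fin n)) (v : Perm (Fin n)) :
    typeOf (Fin.snoc vs v : Fin (m + 1) → Perm (Fin n)) = v * typeOf vs := by
  rw [typeOf_eq, typeOf_eq, ofFn_snoc, List.reverse_append]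
  simp

lemma posAt_m_eq_typeOf {m : ℕ} (vs : Fin m → Perm (Fin n)) : posAt vs m = typeOf vs := rfl

lemma posAt_succ {m : ℕ} (vs : Fin m → Perm (Fin n)) {k : ℕ} (hk : k < m) :
    posAt vs (k + 1) = vs ⟨k, hk⟩ * posAt vs k := by
  unfold posAt
  have hlen : k < (List.ofFn vs).length := by rw [List.length_ofFn]; exact hk
  rw [List.take_succ, List.getElem?_eq_getElem hlen, List.getElem_ofFn]
  simp

lemma IsPathFamily_snoc {m : ℕ} (Js : Fin (m + 1) → Fin n × Fin n)
    (vs : Fin m → Perm (Fin n)) (v : Perm (Fin n)) :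
    IsPathFamily Js (Fin.snoc vs v) ↔
      IsPathFamily (fun p => Js p.castSucc) vs ∧ inSJ (Js (Fin.last m)) v := by
  constructor
  · intro h
    constructor
    · intro p
      have := h p.castSucc
      rwa [Fin.snoc_castSucc] at this
    · have := h (Fin.last m)
      rwa [Fin.snoc_last] at this
  · rintro ⟨h1, h2⟩
    intro p
    induction p using Fin.lastCases with
    | last => rwa [Fin.snoc_last]
    | cast p =>
      have := h1 p
      rwa [← Fin.snoc_castSucc (α := fun _ => Perm (Fin n)) v vs p] at this

def snocE (m : ℕ) (α : Type*) : ((Fin m → α) × α) ≃ (Fin (m + 1) → α) where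
  toFun p := Fin.snoc p.1 p.2
  invFun f := (fun i => f i.castSucc, f (Fin.last m))
  left_inv := by
    rintro ⟨vs, v⟩
    simp only [Fin.snoc_castSucc, Fin.snoc_last]
  right_inv := by
    intro f
    funext i
    induction i using Fin.lastCases with
    | last => simp
    | cast p => simp

def EJ {m : ℕ} (Js : Fin m → Fin n × Fin n) (vs : Fin m → Perm (Fin n)) : ℕ :=
  ∑ p : Fin m, 2 * invJ (Js p) (posAt vs p)

lemma EJ_snoc {m : ℕ} (Js : Fin (m + 1) → Fin n × Fin n) (vs : Fin m → Perm (Fin n))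
    (v : Perm (Fin n)) :
    EJ Js (Fin.snoc vs v) = EJ (fun p => Js p.castSucc) vs +
      2 * invJ (Js (Fin.last m)) (typeOf vs) := by
  unfold EJ
  rw [Fin.sum_univ_castSucc]
  congr 1
  · apply Finset.sum_congr rfl
    intro p _
    have hcast : ((p.castSucc : Fin (m + 1)) : ℕ) = (p : ℕ) := rfl
    rw [hcast, posAt_snoc vs v (le_of_lt p.2)]
  · rw [show ((Fin.last m : Fin (m + 1)) : ℕ) = m from rfl,
      posAt_snoc vs v (le_refl m), posAt_m_eq_typeOf]

lemma Cprod_succ {m : ℕ} (Tf : Perm (Fin n) → H) (Js : Fin (m + 1) → Fin n × Fin n) :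
    Cprod Tf Js = Cprod Tf (fun p => Js p.castSucc) * CJ Tf (Js (Fin.last m)) := by
  unfold Cprod
  rw [List.ofFn_succ' (fun p => CJ Tf (Js p)), List.prod_concat]

lemma Qp_nat_add (x y : ℕ) : Qp ((x + y : ℕ) : ℤ) = Qp (x : ℤ) * Qp (y : ℤ) := by
  have h : ((x + y : ℕ) : ℤ) = (x : ℤ) + (y : ℤ) := by push_cast; ring
  rw [h]
  exact (Qp_add _ _).symm

/-- Main structural lemma: natural-basis coefficients of products of
Kazhdan–Lusztig elements count path families weighted by `q^{invJ}`. -/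
lemma lemM (T : Module.Basis (Perm (Fin n)) R2 H) (hT : HeckeOK ⇑T) :
    ∀ (m : ℕ) (Js : Fin m → Fin n × Fin n) (w : Perm (Fin n)),
      T.repr (Cprod ⇑T Js) w =
        ∑ vs ∈ (univ : Finset (Fin m → Perm (Fin n))).filter
          (fun vs => IsPathFamily Js vs ∧ typeOf vs = w), Qp (EJ Js vs : ℤ) := by
  intro m
  induction m with
  | zero =>
    intro Js w
    have hC : Cprod ⇑T Js = T 1 := by
      unfold Cprod
      rw [List.ofFn_zero, List.prod_nil, hT.1]
    rw [hC, Module.Basis.repr_self, Finsupp.single_apply]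
    rcases eq_or_ne w 1 with rfl | hw
    · rw [if_pos rfl]
      have hfil : (univ : Finset (Fin 0 → Perm (Fin n))).filter
          (fun vs => IsPathFamily Js vs ∧ typeOf vs = 1) = univ := by
        apply Finset.filter_true_of_mem
        intro vs _
        exact ⟨fun p => p.elim0, rfl⟩
      rw [hfil]
      have hconst : ∀ vs ∈ (univ : Finset (Fin 0 → Perm (Fin n))),
          Qp (EJ Js vs : ℤ) = 1 := by
        intro vs _
        have h0 : EJ Js vs = 0 := by unfold EJ; simp
        rw [h0]
        exact Qp_zero
      rw [Finset.sum_congr rfl hconst, Finset.sum_const, Finset.card_univ,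
        Fintype.card_unique]
      simp
    · rw [if_neg (fun h => hw h.symm)]
      symm
      apply Finset.sum_eq_zero
      intro vs hvs
      rw [mem_filter] at hvs
      exfalso
      apply hw
      rw [← hvs.2.2]
      rfl
  | succ m ih =>
    intro Js w
    set Js' := fun p : Fin m => Js p.castSucc with hJs'
    set Jl := Js (Fin.last m) with hJl
    set SJf := (univ : Finset (Perm (Fin n))).filter (fun v => inSJ Jl v) with hSJf
    rw [Cprod_succ]
    -- expand the left factor in the basis
    have hXC : Cprod ⇑T Js' * CJ ⇑T Jl =
        ∑ u : Perm (Fin n), (T.repr (Cprod ⇑T Js') u) •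
          (Qp (2 * (invJ Jl u : ℤ)) • ∑ v ∈ SJf, T (v * u)) := by
      conv_lhs => rw [← Module.Basis.sum_repr T (Cprod ⇑T Js')]
      rw [Finset.sum_mul]
      apply Finset.sum_congr rfl
      intro u _
      rw [smul_mul_assoc, T_mul_CJ T hT Jl u]
    have hrepr : T.repr (Cprod ⇑T Js' * CJ ⇑T Jl) w =
        ∑ u : Perm (Fin n), (T.repr (Cprod ⇑T Js') u) *
          (Qp (2 * (invJ Jl u : ℤ)) * (if inSJ Jl (w * u⁻¹) then 1 else 0)) := by
      rw [hXC, map_sum, Finsupp.coe_finset_sum, Finset.sum_apply]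
      apply Finset.sum_congr rfl
      intro u _
      rw [map_smul, map_smul, Finsupp.smul_apply, Finsupp.smul_apply, smul_eq_mul,
        smul_eq_mul]
      congr 1
      congr 1
      rw [map_sum, Finsupp.coe_finset_sum, Finset.sum_apply]
      have hterm : ∀ v ∈ SJf, (T.repr (T (v * u))) w = if v = w * u⁻¹ then (1 : R2) else 0 := by
        intro v _
        rw [Module.Basis.repr_self, Finsupp.single_apply]
        by_cases h : v * u = w
        · rw [if_pos h, if_pos (eq_mul_inv_iff_mul_eq.2 h)]
        · rw [if_neg h, if_neg (fun hh => h (eq_mul_inv_iff_mul_eq.1 hh))]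
      rw [Finset.sum_congr rfl hterm, Finset.sum_ite_eq' SJf (w * u⁻¹) (fun _ => (1 : R2))]
      by_cases h : inSJ Jl (w * u⁻¹)
      · rw [if_pos (mem_filter.2 ⟨mem_univ _, h⟩), if_pos h]
      · rw [if_neg (fun hm => h (mem_filter.1 hm).2), if_neg h]
    rw [hrepr]
    have hA : ∀ u : Perm (Fin n), (T.repr (Cprod ⇑T Js')) u *
        (Qp (2 * (invJ Jl u : ℤ)) * (if inSJ Jl (w * u⁻¹) then 1 else 0)) =
        ∑ vs' ∈ ((univ : Finset (Fin m → Perm (Fin n))).filter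
            (fun vs => IsPathFamily Js' vs)).filter (fun vs => typeOf vs = u),
          Qp (EJ Js' vs' : ℤ) * (Qp (2 * (invJ Jl (typeOf vs') : ℤ)) *
            (if inSJ Jl (w * (typeOf vs')⁻¹) then 1 else 0)) := by
      intro u
      rw [ih Js' u, Finset.sum_mul, ← Finset.filter_filter]
      apply Finset.sum_congr rfl
      intro vs' hvs'
      rw [mem_filter] at hvs'
      rw [hvs'.2]
    rw [Finset.sum_congr rfl (fun u _ => hA u),
      Finset.sum_fiberwise_of_maps_to (fun vs _ => mem_univ (typeOf vs)) _]
    -- pointwise description of the right-hand side via `Fin.snoc`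
    have hpair : ∀ (vs' : Fin m → Perm (Fin n)) (v : Perm (Fin n)),
        (if IsPathFamily Js (Fin.snoc vs' v) ∧ typeOf (Fin.snoc vs' v) = w
          then Qp (EJ Js (Fin.snoc vs' v) : ℤ) else 0) =
        (if v = w * (typeOf vs')⁻¹ then
          (if IsPathFamily Js' vs' ∧ inSJ Jl (w * (typeOf vs')⁻¹)
            then Qp (EJ Js' vs' : ℤ) * Qp (2 * (invJ Jl (typeOf vs') : ℤ)) else 0)
          else 0) := by
      intro vs' v
      rw [IsPathFamily_snoc, typeOf_snoc]
      by_cases hv : v = w * (typeOf vs')⁻¹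
      · subst hv
        rw [if_pos rfl]
        have htype : w * (typeOf vs')⁻¹ * typeOf vs' = w := by group
        by_cases hpf : IsPathFamily Js' vs' ∧ inSJ Jl (w * (typeOf vs')⁻¹)
        · rw [if_pos ⟨⟨hpf.1, hpf.2⟩, htype⟩, if_pos hpf]
          rw [EJ_snoc, Qp_nat_add]
          have hcast : ((2 * invJ Jl (typeOf vs') : ℕ) : ℤ) =
              2 * (invJ Jl (typeOf vs') : ℤ) := by push_cast; ring
          rw [hcast]
        · rw [if_neg ?_, if_neg hpf]
          rintro ⟨⟨h1, h2⟩, -⟩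
          exact hpf ⟨h1, h2⟩
      · rw [if_neg hv, if_neg ?_]
        rintro ⟨-, htyp⟩
        exact hv (eq_mul_inv_iff_mul_eq.2 htyp)
    -- transform the right-hand side into a sum over pairs
    conv_rhs => rw [Finset.sum_filter,
      ← Equiv.sum_comp (snocE m (Perm (Fin n)))
        (fun vs => if IsPathFamily Js vs ∧ typeOf vs = w then Qp (EJ Js vs : ℤ) else 0),
      Fintype.sum_prod_type]
    rw [Finset.sum_filter]
    apply Finset.sum_congr rfl
    intro vs' _
    have hsnocE : ∀ v : Perm (Fin n), (snocE m (Perm (Fin n))) (vs', v) = Fin.snoc vs' v :=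
      fun v => rfl
    calc (if IsPathFamily Js' vs' then
            Qp (EJ Js' vs' : ℤ) * (Qp (2 * (invJ Jl (typeOf vs') : ℤ)) *
              (if inSJ Jl (w * (typeOf vs')⁻¹) then 1 else 0)) else 0)
        = (if IsPathFamily Js' vs' ∧ inSJ Jl (w * (typeOf vs')⁻¹) then
            Qp (EJ Js' vs' : ℤ) * Qp (2 * (invJ Jl (typeOf vs') : ℤ)) else 0) := by
          by_cases h1 : IsPathFamily Js' vs'
          · by_cases h2 : inSJ Jl (w * (typeOf vs')⁻¹)
            · rw [if_pos h1, if_pos h2, mul_one, if_pos ⟨h1, h2⟩]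
            · rw [if_pos h1, if_neg h2, mul_zero, mul_zero,
                if_neg (show ¬(IsPathFamily Js' vs' ∧ inSJ Jl (w * (typeOf vs')⁻¹)) from
                  fun h => h2 h.2)]
          · rw [if_neg h1,
              if_neg (show ¬(IsPathFamily Js' vs' ∧ inSJ Jl (w * (typeOf vs')⁻¹)) from
                fun h => h1 h.1)]
      _ = ∑ v : Perm (Fin n), (if v = w * (typeOf vs')⁻¹ then
            (if IsPathFamily Js' vs' ∧ inSJ Jl (w * (typeOf vs')⁻¹)
              then Qp (EJ Js' vs' : ℤ) * Qp (2 * (invJ Jl (typeOf vs') : ℤ)) else 0)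
            else 0) := by
          rw [Finset.sum_ite_eq' univ (w * (typeOf vs')⁻¹), if_pos (mem_univ _)]
      _ = ∑ v : Perm (Fin n), (if IsPathFamily Js (Fin.snoc vs' v) ∧
            typeOf (Fin.snoc vs' v) = w then Qp (EJ Js (Fin.snoc vs' v) : ℤ) else 0) := by
          apply Finset.sum_congr rfl
          intro v _
          exact (hpair vs' v).symm
      _ = ∑ v : Perm (Fin n), (if IsPathFamily Js ((snocE m (Perm (Fin n))) (vs', v)) ∧
            typeOf ((snocE m (Perm (Fin n))) (vs', v)) = w
            then Qp (EJ Js ((snocE m (Perm (Fin n))) (vs', v)) : ℤ) else 0) := by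
          apply Finset.sum_congr rfl
          intro v _
          rw [hsnocE v]

/-! ### The word-inversion statistic -/

lemma posAt_fin_succ {m : ℕ} (vs : Fin m → Perm (Fin n)) (p : Fin m) :
    posAt vs ((p : ℕ) + 1) = vs p * posAt vs (p : ℕ) := by
  have h := posAt_succ vs p.2
  rwa [Fin.eta] at h

lemma wordInv_eq_sum {m : ℕ} (Js : Fin m → Fin n × Fin n) (vs : Fin m → Perm (Fin n)) :
    wordInv Js vs = ∑ y : Fin m × Fin 2,
      ((univ : Finset (Fin n × Fin n)).filter fun pr =>
        pr.1 < pr.2 ∧ meetAt Js vs y.1 pr.1 pr.2 ∧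
          ((y.2 = 0 ∧ posAt vs y.1 pr.2 < posAt vs y.1 pr.1) ∨
           (y.2 = 1 ∧ posAt vs (y.1.1 + 1) pr.2 < posAt vs (y.1.1 + 1) pr.1))).card := by
  rw [wordInv]
  rw [Finset.card_eq_sum_card_fiberwise
    (f := fun x : (Fin n × Fin n) × Fin m × Fin 2 => x.2) (t := univ)
    (fun x _ => mem_univ _)]
  apply Finset.sum_congr rfl
  intro y _
  apply Finset.card_nbij' (fun x => x.1) (fun pr => (pr, y))
  · intro x hx
    rw [Finset.mem_coe, mem_filter] at hx ⊢
    obtain ⟨hx1, hx2⟩ := hx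
    rw [mem_filter] at hx1
    obtain ⟨-, h1, h2, h3⟩ := hx1
    rw [← hx2]
    exact ⟨mem_univ _, h1, h2, h3⟩
  · intro pr hpr
    rw [Finset.mem_coe, mem_filter] at hpr ⊢
    obtain ⟨-, h1, h2, h3⟩ := hpr
    refine ⟨mem_filter.2 ⟨mem_univ _, h1, h2, h3⟩, rfl⟩
  · intro x hx
    rw [Finset.mem_coe, mem_filter] at hx
    exact Prod.ext rfl hx.2.symm
  · intro pr _
    rfl

lemma meet_count_zero {m : ℕ} {Js : Fin m → Fin n × Fin n} {vs : Fin m → Perm (Fin n)}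
    (p : Fin m) :
    ((univ : Finset (Fin n × Fin n)).filter fun pr =>
      pr.1 < pr.2 ∧ meetAt Js vs p pr.1 pr.2 ∧
        (((0 : Fin 2) = 0 ∧ posAt vs p pr.2 < posAt vs p pr.1) ∨
         ((0 : Fin 2) = 1 ∧ posAt vs (p.1 + 1) pr.2 < posAt vs (p.1 + 1) pr.1))).card =
    invJ (Js p) (posAt vs p) := by
  rw [invJ, invQ]
  congr 1
  ext pr
  simp only [mem_filter, mem_univ, true_and]
  constructor
  · rintro ⟨h1, ⟨⟨hlt, hmi⟩, ⟨-, hmj⟩⟩, hA | ⟨h01, -⟩⟩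
    · exact ⟨h1, hmi, hmj, hA⟩
    · exact absurd h01 (by decide)
  · rintro ⟨h1, hmi, hmj, hA⟩
    have hlt : (Js p).1 < (Js p).2 :=
      lt_of_le_of_lt hmj.1 (lt_of_lt_of_le hA hmi.2)
    exact ⟨h1, ⟨⟨hlt, hmi⟩, ⟨hlt, hmj⟩⟩, Or.inl hA⟩

lemma meet_count_one {m : ℕ} {Js : Fin m → Fin n × Fin n} {vs : Fin m → Perm (Fin n)}
    (hpf : IsPathFamily Js vs) (p : Fin m) :
    ((univ : Finset (Fin n × Fin n)).filter fun pr =>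
      pr.1 < pr.2 ∧ meetAt Js vs p pr.1 pr.2 ∧
        (((1 : Fin 2) = 0 ∧ posAt vs p pr.2 < posAt vs p pr.1) ∨
         ((1 : Fin 2) = 1 ∧ posAt vs (p.1 + 1) pr.2 < posAt vs (p.1 + 1) pr.1))).card =
    invJ (Js p) (posAt vs (p.1 + 1)) := by
  have hpos1 : posAt vs ((p : ℕ) + 1) = vs p * posAt vs (p : ℕ) := posAt_fin_succ vs p
  have hmemiff : ∀ x : Fin n, memJ (Js p) (posAt vs ((p : ℕ) + 1) x) ↔
      memJ (Js p) (posAt vs (p : ℕ) x) := by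
    intro x
    rw [hpos1, Perm.mul_apply]
    exact memJ_apply_iff (hpf p) _
  rw [invJ, invQ]
  congr 1
  ext pr
  simp only [mem_filter, mem_univ, true_and]
  constructor
  · rintro ⟨h1, ⟨⟨hlt, hmi⟩, ⟨-, hmj⟩⟩, ⟨h10, -⟩ | hB⟩
    · exact absurd h10 (by decide)
    · exact ⟨h1, (hmemiff pr.1).2 hmi, (hmemiff pr.2).2 hmj, hB⟩
  · rintro ⟨h1, hmi, hmj, hB⟩
    have hlt : (Js p).1 < (Js p).2 :=
      lt_of_le_of_lt hmj.1 (lt_of_lt_of_le hB hmi.2)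
    exact ⟨h1, ⟨⟨hlt, (hmemiff pr.1).1 hmi⟩, ⟨hlt, (hmemiff pr.2).1 hmj⟩⟩, Or.inr hB⟩

lemma posAt_zero {m : ℕ} (vs : Fin m → Perm (Fin n)) : posAt vs 0 = 1 := rfl

/-- The key identity: `wordInv = ℓ(type) + EJ`. -/
lemma wordInv_telescope {m : ℕ} {Js : Fin m → Fin n × Fin n}
    {vs : Fin m → Perm (Fin n)} (hpf : IsPathFamily Js vs) :
    (wordInv Js vs : ℤ) = (len (typeOf vs) : ℤ) + (EJ Js vs : ℤ) := by
  rw [wordInv_eq_sum, Fintype.sum_prod_type]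
  have hinner : ∀ p : Fin m, (∑ k : Fin 2,
      ((univ : Finset (Fin n × Fin n)).filter fun pr =>
        pr.1 < pr.2 ∧ meetAt Js vs p pr.1 pr.2 ∧
          ((k = 0 ∧ posAt vs p pr.2 < posAt vs p pr.1) ∨
           (k = 1 ∧ posAt vs (p.1 + 1) pr.2 < posAt vs (p.1 + 1) pr.1))).card) =
      invJ (Js p) (posAt vs p) + invJ (Js p) (posAt vs (p.1 + 1)) := by
    intro p
    rw [Fin.sum_univ_two, meet_count_zero p, meet_count_one hpf p]
  rw [Finset.sum_congr rfl (fun p _ => hinner p)]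
  have hF : ∀ p : Fin m, (invJ (Js p) (posAt vs (p.1 + 1)) : ℤ) =
      (invJ (Js p) (posAt vs p) : ℤ) +
        (len (posAt vs (p.1 + 1)) : ℤ) - (len (posAt vs p) : ℤ) := by
    intro p
    have h := lenF (hpf p) (posAt vs (p : ℕ))
    rw [← posAt_fin_succ vs p] at h
    have h' := congrArg (fun x : ℕ => (x : ℤ)) h
    push_cast at h'
    linarith
  push_cast
  rw [Finset.sum_congr rfl (fun p (_ : p ∈ univ) => by rw [hF p])]
  have hsplit : ∑ p : Fin m, ((invJ (Js p) (posAt vs p) : ℤ) +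
      ((invJ (Js p) (posAt vs p) : ℤ) +
        (len (posAt vs (p.1 + 1)) : ℤ) - (len (posAt vs p) : ℤ))) =
      (∑ p : Fin m, 2 * (invJ (Js p) (posAt vs p) : ℤ)) +
      (∑ p : Fin m, ((len (posAt vs ((p : ℕ) + 1)) : ℤ) - (len (posAt vs (p : ℕ)) : ℤ))) := by
    rw [← Finset.sum_add_distrib]
    apply Finset.sum_congr rfl
    intro p _
    ring
  rw [hsplit]
  have htel : ∑ p : Fin m, ((len (posAt vs ((p : ℕ) + 1)) : ℤ) -
      (len (posAt vs (p : ℕ)) : ℤ)) = (len (typeOf vs) : ℤ) := by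
    rw [Fin.sum_univ_eq_sum_range (fun k => (len (posAt vs (k + 1)) : ℤ) -
      (len (posAt vs k) : ℤ)) m]
    rw [Finset.sum_range_sub (fun k => (len (posAt vs k) : ℤ)) m]
    rw [posAt_zero, len_one, posAt_m_eq_typeOf]
    simp
  rw [htel]
  have hEJ : (EJ Js vs : ℤ) = ∑ p : Fin m, 2 * (invJ (Js p) (posAt vs p) : ℤ) := by
    rw [EJ]
    push_cast
    rfl
  rw [hEJ]
  ring

end
noncomputable section
open Equiv Finset
open scoped Classical

/-- Proposition 4.1 / `p:qewcoeff`.  For intervals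
`J_1, …, J_m ⊆ [n]` and the star network `G = G_{J_1} ∘ ⋯ ∘ G_{J_m}` with
weighted path matrix `B`, the coefficient of `T_w` in the natural-basis
expansion of `C̃_{s_{J_1}}(q) ⋯ C̃_{s_{J_m}}(q)` equals
`q^{-ℓ(w)/2} σ_B(x^{e,w})`, where
`σ_B(x^{e,w}) = [z_G] b_{1,w_1} ⋯ b_{n,w_n}`. -/
theorem kl_product_coefficient_sigma
    {n m : ℕ} (Js : Fin m → Fin n × Fin n) (hJs : ∀ p, (Js p).1 ≤ (Js p).2)
    {H : Type*} [Ring H] [Algebra R2 H]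
    (T : Module.Basis (Perm (Fin n)) R2 H) (hT : HeckeOK ⇑T)
    (w : Perm (Fin n)) :
    T.repr (Cprod (⇑T) Js) w = Qp (-(len w : ℤ)) * zGcoeff Js w := by
  rw [lemM T hT m Js w, zGcoeff, Finset.mul_sum]
  apply Finset.sum_congr rfl
  intro vs hvs
  rw [mem_filter] at hvs
  obtain ⟨-, hpf, htype⟩ := hvs
  rw [Qp_add]
  congr 1
  have h := wordInv_telescope hpf
  rw [htype] at h
  omega

end
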